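/- Let m ∈ ℕ and l ∈ ℕ. Then: |Ξ_0^{2m}| = 2·C(2m−1, m−1) for m ≥ 1; |Ξ_l^{2m}| = 2·C(2m, m−l) for m ≥ 1 and l ≥ 1; |Ξ_0^{2m+1}| = C(2m+1, m); and |Ξ_l^{2m+1}| = C(2m+2, m+1−l) for l ≥ 1. Here C(n,r) is the binomial coefficient (which vanishes when r > n or r < 0). -/

import Mathlib

/-- The generator `p` of the infinite dihedral group `C₂ * C₂`, realized as the
reflection `sr 0` in `DihedralGroup 0`. -/
def pgen : DihedralGroup 0 := DihedralGroup.sr 0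

/-- The generator `q` of the infinite dihedral group `C₂ * C₂`, realized as the
reflection `sr 1` in `DihedralGroup 0`. -/
def qgen : DihedralGroup 0 := DihedralGroup.sr 1

/-- `g^b` for a bit `b`: `g⁰ = 1`, `g¹ = g`. -/
def bpow (g : DihedralGroup 0) (b : Bool) : DihedralGroup 0 := if b then g else 1

/-- The generator at (0-based) index `i`, i.e. at 1-based position `i+1`:
`q` at odd positions, `p` at even positions. -/
def genAt (i : ℕ) : DihedralGroup 0 := if i % 2 = 0 then qgen else pgen

/-- The word `w(x) = r_n^{x_n} ⋯ r_2^{x_2} r_1^{x_1}` associated with a bit string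
`x = x₁…x_n`, where `r_i = q` if `i` is odd and `r_i = p` if `i` is even. -/
def wword {n : ℕ} (x : Fin n → Bool) : DihedralGroup 0 :=
  ((List.finRange n).reverse.map (fun i => bpow (genAt i.val) (x i))).prod

/-- The reduced word `t(u,k,v) = p^u (qp)^k q^v`. -/
def tword (u : Bool) (k : ℕ) (v : Bool) : DihedralGroup 0 :=
  bpow pgen u * (qgen * pgen) ^ k * bpow qgen v

/-- `Θⁿ_{ukv}` : the set of bit strings `x` of length `n` with `w(x) = p^u (qp)^k q^v`,
empty by convention when `k < 0`. -/
def Theta (n : ℕ) (u : Bool) (k : ℤ) (v : Bool) : Finset (Fin n → Bool) :=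
  if k < 0 then ∅ else Finset.univ.filter (fun x => wword x = tword u k.toNat v)

/-- `Ξ_l^α = Θ^α_{0,l,0} ∪ Θ^α_{1,l,0} ∪ Θ^α_{0,l−1,1} ∪ Θ^α_{1,l−1,1}`. -/
def Xi (α l : ℕ) : Finset (Fin α → Bool) :=
  Theta α false l false ∪ Theta α true l false ∪
    Theta α false ((l : ℤ) - 1) true ∪ Theta α true ((l : ℤ) - 1) true

namespace S15
open DihedralGroup

def zi (a : ZMod 0) : ℤ := a

@[simp] lemma zi_add (a b : ZMod 0) : zi (a + b) = zi a + zi b := rfl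
@[simp] lemma zi_sub (a b : ZMod 0) : zi (a - b) = zi a - zi b := rfl
@[simp] lemma zi_zero : zi 0 = 0 := rfl
@[simp] lemma zi_one : zi 1 = 1 := rfl
@[simp] lemma zi_neg (a : ZMod 0) : zi (-a) = -zi a := rfl
@[simp] lemma zi_natCast (k : ℕ) : zi (k : ZMod 0) = (k : ℤ) := rfl

/-- integer encoding of the infinite dihedral group -/
def E : DihedralGroup 0 → ℤ
  | .r a => 2 * zi a
  | .sr a => 2 * zi a - 1

lemma E_inj : Function.Injective E := by
  rintro (a | a) (b | b) h <;> simp only [E] at h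
  · exact congrArg DihedralGroup.r (show zi a = zi b by omega)
  · omega
  · omega
  · exact congrArg DihedralGroup.sr (show zi a = zi b by omega)

/-- the flip at (0-based) index i -/
def flipAt (i : ℕ) (e : ℤ) : ℤ := if ((i % 2 = 0) ↔ (e % 2 = 0)) then e + 1 else e - 1

lemma E_genAt_mul (i : ℕ) (z : DihedralGroup 0) : E (genAt i * z) = flipAt i (E z) := by
  unfold genAt flipAt
  rcases z with a | a <;> by_cases hi : i % 2 = 0 <;>
    simp only [hi, if_true, if_false, qgen, pgen, sr_mul_r, sr_mul_sr, E, zi_add, zi_sub,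
      zi_zero, zi_one, if_pos, reduceIte] <;> split_ifs with h <;>
    simp only [true_iff, false_iff, iff_true, iff_false, not_not] at h <;> omega

lemma flipAt_invol (i : ℕ) (e : ℤ) : flipAt i (flipAt i e) = e := by
  unfold flipAt; split_ifs with h1 h2 h2 <;> omega

lemma flipAt_eq_iff (i : ℕ) (a e : ℤ) : flipAt i a = e ↔ a = flipAt i e := by
  constructor <;> rintro rfl <;> rw [flipAt_invol]

lemma wword_succ {n : ℕ} (x : Fin (n + 1) → Bool) :
    wword x = bpow (genAt n) (x (Fin.last n)) * wword (fun i => x i.castSucc) := by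
  unfold wword
  rw [List.finRange_succ_last, List.reverse_append]
  simp [List.map_reverse, List.map_map, Function.comp_def]

/-- the path count -/
def cnt (n : ℕ) (e : ℤ) : ℕ :=
  (Finset.univ.filter (fun x : Fin n → Bool => E (wword x) = e)).card

lemma E_one : E 1 = 0 := rfl

lemma cnt_zero (e : ℤ) : cnt 0 e = if e = 0 then 1 else 0 := by
  have hw : ∀ x : Fin 0 → Bool, wword x = 1 := fun x => by simp [wword]
  unfold cnt
  simp only [hw, E_one]
  rcases eq_or_ne e 0 with rfl | he
  · rw [if_pos rfl]
    rw [Finset.filter_true_of_mem (fun _ _ => rfl)]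
    simp
  · rw [if_neg he, Finset.card_eq_zero, Finset.filter_eq_empty_iff]
    exact fun _ _ h => he h.symm

lemma cnt_succ (n : ℕ) (e : ℤ) : cnt (n + 1) e = cnt n e + cnt n (flipAt n e) := by
  unfold cnt
  rw [Finset.card_filter, Finset.card_filter, Finset.card_filter,
    ← Equiv.sum_comp (Fin.snocEquiv (fun _ : Fin (n+1) => Bool))
      (fun x => if E (wword x) = e then (1:ℕ) else 0),
    Fintype.sum_prod_type, Fintype.sum_bool]
  have hsnoc : ∀ (b : Bool) (y : Fin n → Bool),
      (Fin.snocEquiv (fun _ : Fin (n+1) => Bool)) (b, y) = Fin.snoc y b := fun _ _ => rfl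
  have hww : ∀ (b : Bool) (y : Fin n → Bool),
      wword (Fin.snoc y b : Fin (n+1) → Bool) = bpow (genAt n) b * wword y := by
    intro b y
    rw [wword_succ]
    simp [Fin.snoc_last, Fin.snoc_castSucc]
  simp only [hsnoc, hww]
  have h1 : ∀ y : Fin n → Bool,
      (E (bpow (genAt n) true * wword y) = e) = (E (wword y) = flipAt n e) := by
    intro y
    rw [show bpow (genAt n) true = genAt n from rfl, E_genAt_mul, flipAt_eq_iff]
  have h2 : ∀ y : Fin n → Bool,
      (E (bpow (genAt n) false * wword y) = e) = (E (wword y) = e) := by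
    intro y
    simp [bpow]
  simp only [h1, h2]
  rw [add_comm]

/-- clipped binomial coefficient with integer lower index -/
def B (n : ℕ) (k : ℤ) : ℕ := if 0 ≤ k then n.choose k.toNat else 0

lemma B_natCast (n j : ℕ) : B n (j : ℤ) = n.choose j := by
  unfold B; rw [if_pos (by omega)]; simp

lemma B_neg (n : ℕ) {k : ℤ} (h : k < 0) : B n k = 0 := by
  unfold B; rw [if_neg (by omega)]

lemma B_zero_left (k : ℤ) : B 0 k = if k = 0 then 1 else 0 := by
  unfold B
  split_ifs with h1 h2 h2
  · simp [show k.toNat = 0 by omega]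
  · have : 0 < k.toNat := by omega
    exact Nat.choose_eq_zero_of_lt this
  · omega
  · rfl

lemma B_pascal (n : ℕ) (k : ℤ) : B (n + 1) k = B n k + B n (k - 1) := by
  unfold B
  rcases lt_trichotomy k 0 with h | rfl | h
  · rw [if_neg (by omega), if_neg (by omega), if_neg (by omega)]
  · simp
  · rw [if_pos (by omega), if_pos (by omega), if_pos (by omega)]
    rw [show k.toNat = (k - 1).toNat + 1 by omega, Nat.choose_succ_succ]
    ring

lemma cnt_formula (n : ℕ) : ∀ e : ℤ, cnt (n + 1) e = B n ((e + n) / 2) := by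
  induction n with
  | zero =>
    intro e
    rw [cnt_succ, cnt_zero, cnt_zero, B_zero_left]
    unfold flipAt
    split_ifs <;> omega
  | succ n ih =>
    intro e
    rw [cnt_succ, ih, ih, B_pascal]
    unfold flipAt
    by_cases hp : ((n + 1) % 2 = 0) ↔ (e % 2 = 0)
    · rw [if_pos hp]
      have h1 : (e + (n:ℤ)) / 2 = (e + ((n+1 : ℕ) : ℤ)) / 2 - 1 := by omega
      have h2 : (e + 1 + (n:ℤ)) / 2 = (e + ((n+1 : ℕ) : ℤ)) / 2 := by omega
      rw [h1, h2]
      exact add_comm _ _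
    · rw [if_neg hp]
      have h1 : (e + (n:ℤ)) / 2 = (e + ((n+1 : ℕ) : ℤ)) / 2 := by omega
      have h2 : (e - 1 + (n:ℤ)) / 2 = (e + ((n+1 : ℕ) : ℤ)) / 2 - 1 := by omega
      rw [h1, h2]

lemma qp_pow (k : ℕ) : (qgen * pgen) ^ k = DihedralGroup.r (-(k : ZMod 0)) := by
  induction k with
  | zero => simp [one_def, -r_zero]
  | succ k ih =>
    rw [pow_succ, ih, show qgen * pgen = DihedralGroup.r (0 - 1 : ZMod 0) by
      rw [qgen, pgen, sr_mul_sr], r_mul_r]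
    exact congrArg DihedralGroup.r (by push_cast; ring)

lemma E_tword (u v : Bool) (k : ℕ) :
    E (tword u k v) = if u then (if v then 2*(k:ℤ)+2 else -(2*(k:ℤ))-1)
      else (if v then 2*(k:ℤ)+1 else -(2*(k:ℤ))) := by
  unfold tword
  rw [qp_pow]
  cases u <;> cases v <;>
    simp [bpow, qgen, pgen, sr_mul_r, r_mul_sr, sr_mul_sr, E] <;> omega

lemma E_tff (k : ℕ) : E (tword false k false) = -(2*(k:ℤ)) := by simp [E_tword]
lemma E_ttf (k : ℕ) : E (tword true k false) = -(2*(k:ℤ))-1 := by simp [E_tword]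
lemma E_tft (k : ℕ) : E (tword false k true) = 2*(k:ℤ)+1 := by simp [E_tword]
lemma E_ttt (k : ℕ) : E (tword true k true) = 2*(k:ℤ)+2 := by simp [E_tword]

lemma Theta_card_nat (n : ℕ) (u v : Bool) (k : ℕ) :
    (Theta n u (k : ℤ) v).card = cnt n (E (tword u k v)) := by
  unfold Theta cnt
  rw [if_neg (by omega : ¬(k:ℤ) < 0)]
  congr 1
  ext x
  simp only [Finset.mem_filter, Finset.mem_univ, true_and, Int.toNat_natCast]
  exact ⟨congrArg E, fun h => E_inj h⟩

lemma Theta_empty (n : ℕ) (u v : Bool) {k : ℤ} (hk : k < 0) : Theta n u k v = ∅ := by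
  unfold Theta; rw [if_pos hk]

lemma Theta_disjoint (n : ℕ) (u v u' v' : Bool) (k k' : ℕ)
    (h : E (tword u k v) ≠ E (tword u' k' v')) :
    Disjoint (Theta n u (k:ℤ) v) (Theta n u' (k':ℤ) v') := by
  rw [Finset.disjoint_left]
  intro x hx hy
  unfold Theta at hx hy
  rw [if_neg (by omega : ¬(k:ℤ) < 0)] at hx
  rw [if_neg (by omega : ¬(k':ℤ) < 0)] at hy
  simp only [Finset.mem_filter, Finset.mem_univ, true_and, Int.toNat_natCast] at hx hy
  exact h (by rw [← hx, ← hy])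

lemma Xi_card_zero (α : ℕ) :
    (Xi α 0).card = cnt α (E (tword false 0 false)) + cnt α (E (tword true 0 false)) := by
  unfold Xi
  rw [Theta_empty α false true (by norm_num : ((0:ℕ):ℤ) - 1 < 0),
    Theta_empty α true true (by norm_num : ((0:ℕ):ℤ) - 1 < 0),
    Finset.union_empty, Finset.union_empty,
    Finset.card_union_of_disjoint
      (Theta_disjoint α false false true false 0 0 (by rw [E_tff, E_ttf]; omega)),
    Theta_card_nat, Theta_card_nat]

lemma Xi_card_succ (α j : ℕ) :
    (Xi α (j+1)).card =
      cnt α (E (tword false (j+1) false)) + cnt α (E (tword true (j+1) false)) +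
        cnt α (E (tword false j true)) + cnt α (E (tword true j true)) := by
  unfold Xi
  rw [show ((j+1 : ℕ) : ℤ) - 1 = ((j:ℕ) : ℤ) by push_cast; ring]
  have d12 := Theta_disjoint α false false true false (j+1) (j+1) (by rw [E_tff, E_ttf]; omega)
  have d13 := Theta_disjoint α false false false true (j+1) j (by rw [E_tff, E_tft]; omega)
  have d23 := Theta_disjoint α true false false true (j+1) j (by rw [E_ttf, E_tft]; omega)
  have d14 := Theta_disjoint α false false true true (j+1) j (by rw [E_tff, E_ttt]; omega)
  have d24 := Theta_disjoint α true false true true (j+1) j (by rw [E_ttf, E_ttt]; omega)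
  have d34 := Theta_disjoint α false true true true j j (by rw [E_tft, E_ttt]; omega)
  rw [Finset.card_union_of_disjoint (by
      rw [Finset.disjoint_union_left, Finset.disjoint_union_left]
      exact ⟨⟨d14, d24⟩, d34⟩),
    Finset.card_union_of_disjoint (by
      rw [Finset.disjoint_union_left]
      exact ⟨d13, d23⟩),
    Finset.card_union_of_disjoint d12,
    Theta_card_nat, Theta_card_nat, Theta_card_nat, Theta_card_nat]

lemma B_compl (N d : ℕ) (c : ℤ) (h : c + d = N) : B N c = Nat.choose N d := by
  rcases le_or_gt 0 c with hc | hc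
  · obtain ⟨c', rfl⟩ : ∃ c' : ℕ, c = (c' : ℤ) := ⟨c.toNat, by omega⟩
    rw [B_natCast, show c' = N - d by omega, Nat.choose_symm (by omega : d ≤ N)]
  · rw [B_neg N hc, eq_comm]
    exact Nat.choose_eq_zero_of_lt (by omega)

end S15

/-- cardinalities of `Ξ_l^α`. Here the lower binomial indices `m−l` and
`m+1−l` of the natural-language statement are written in the equivalent form `m+l` and
`m+1+l` (using `C(n,r) = C(n,n−r)`), which also vanishes exactly when the intended value
is zero (`l > m`, resp. `l > m+1`). -/


theorem statement15 (m l : ℕ) :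
    (1 ≤ m → (Xi (2 * m) 0).card = 2 * Nat.choose (2 * m - 1) (m - 1)) ∧
    (1 ≤ m → 1 ≤ l → (Xi (2 * m) l).card = 2 * Nat.choose (2 * m) (m + l)) ∧
    ((Xi (2 * m + 1) 0).card = Nat.choose (2 * m + 1) m) ∧
    (1 ≤ l → (Xi (2 * m + 1) l).card = Nat.choose (2 * m + 2) (m + 1 + l)) := by
  refine ⟨?_, ?_, ?_, ?_⟩
  · intro hm
    obtain ⟨m', rfl⟩ : ∃ m', m = m' + 1 := ⟨m - 1, by omega⟩
    rw [S15.Xi_card_zero, S15.E_tff, S15.E_ttf,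
      show 2 * (m'+1) = (2*m'+1)+1 by ring,
      S15.cnt_formula, S15.cnt_formula,
      show (-(2*((0:ℕ):ℤ)) + ((2*m'+1 : ℕ):ℤ))/2 = ((m' : ℕ) : ℤ) by omega,
      show (-(2*((0:ℕ):ℤ))-1 + ((2*m'+1 : ℕ):ℤ))/2 = ((m' : ℕ) : ℤ) by omega,
      S15.B_natCast, Nat.add_sub_cancel, Nat.add_sub_cancel]
    omega
  · intro hm hl
    obtain ⟨m', rfl⟩ : ∃ m', m = m' + 1 := ⟨m - 1, by omega⟩
    obtain ⟨j, rfl⟩ : ∃ j, l = j + 1 := ⟨l - 1, by omega⟩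
    rw [S15.Xi_card_succ, S15.E_tff, S15.E_ttf, S15.E_tft, S15.E_ttt,
      show 2 * (m'+1) = (2*m'+1)+1 by ring,
      S15.cnt_formula, S15.cnt_formula, S15.cnt_formula, S15.cnt_formula,
      show (-(2*((j+1:ℕ):ℤ)) + ((2*m'+1 : ℕ):ℤ))/2 = ((m':ℕ):ℤ) - ((j:ℕ):ℤ) - 1 by omega,
      show (-(2*((j+1:ℕ):ℤ))-1 + ((2*m'+1 : ℕ):ℤ))/2 = ((m':ℕ):ℤ) - ((j:ℕ):ℤ) - 1 by omega,
      show (2*((j:ℕ):ℤ)+1 + ((2*m'+1 : ℕ):ℤ))/2 = ((m'+j+1 : ℕ):ℤ) by omega,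
      show (2*((j:ℕ):ℤ)+2 + ((2*m'+1 : ℕ):ℤ))/2 = ((m'+j+1 : ℕ):ℤ) by omega,
      S15.B_compl (2*m'+1) (m'+j+1+1) (((m':ℕ):ℤ) - ((j:ℕ):ℤ) - 1) (by push_cast; ring),
      S15.B_natCast,
      show m'+1+(j+1) = (m'+j+1)+1 by omega,
      Nat.choose_succ_succ (2*m'+1) (m'+j+1)]
    simp only [Nat.succ_eq_add_one]
    have p1 : Nat.choose ((2*m'+1)+1) ((m'+j+1)+1)
        = Nat.choose (2*m'+1) (m'+j+1) + Nat.choose (2*m'+1) ((m'+j+1)+1) :=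
      Nat.choose_succ_succ _ _
    omega
  · rw [S15.Xi_card_zero, S15.E_tff, S15.E_ttf,
      S15.cnt_formula, S15.cnt_formula,
      show (-(2*((0:ℕ):ℤ)) + ((2*m : ℕ):ℤ))/2 = ((m:ℕ):ℤ) by omega,
      show (-(2*((0:ℕ):ℤ))-1 + ((2*m : ℕ):ℤ))/2 = ((m:ℕ):ℤ) - 1 by omega,
      S15.B_natCast,
      S15.B_compl (2*m) (m+1) (((m:ℕ):ℤ) - 1) (by push_cast; ring)]
    have hs : Nat.choose (2*m+1) (m+1) = Nat.choose (2*m+1) m := by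
      rw [← Nat.choose_symm (show m+1 ≤ 2*m+1 by omega)]
      congr 1
      omega
    have p1 : Nat.choose (2*m+1) (m+1) = Nat.choose (2*m) m + Nat.choose (2*m) (m+1) :=
      Nat.choose_succ_succ _ _
    omega
  · intro hl
    obtain ⟨j, rfl⟩ : ∃ j, l = j + 1 := ⟨l - 1, by omega⟩
    rw [S15.Xi_card_succ, S15.E_tff, S15.E_ttf, S15.E_tft, S15.E_ttt,
      S15.cnt_formula, S15.cnt_formula, S15.cnt_formula, S15.cnt_formula,
      show (-(2*((j+1:ℕ):ℤ)) + ((2*m : ℕ):ℤ))/2 = ((m:ℕ):ℤ) - ((j:ℕ):ℤ) - 1 by omega,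
      show (-(2*((j+1:ℕ):ℤ))-1 + ((2*m : ℕ):ℤ))/2 = ((m:ℕ):ℤ) - ((j:ℕ):ℤ) - 2 by omega,
      show (2*((j:ℕ):ℤ)+1 + ((2*m : ℕ):ℤ))/2 = ((m+j : ℕ):ℤ) by omega,
      show (2*((j:ℕ):ℤ)+2 + ((2*m : ℕ):ℤ))/2 = ((m+j+1 : ℕ):ℤ) by omega,
      S15.B_compl (2*m) (m+j+1) (((m:ℕ):ℤ) - ((j:ℕ):ℤ) - 1) (by push_cast; ring),
      S15.B_compl (2*m) (m+j+1+1) (((m:ℕ):ℤ) - ((j:ℕ):ℤ) - 2) (by push_cast; ring),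
      S15.B_natCast, S15.B_natCast,
      show m+1+(j+1) = (m+j+1)+1 by omega,
      show 2*m+2 = (2*m+1)+1 by omega,
      Nat.choose_succ_succ (2*m+1) (m+j+1)]
    simp only [Nat.succ_eq_add_one]
    have p1 : Nat.choose (2*m+1) ((m+j+1)+1)
        = Nat.choose (2*m) (m+j+1) + Nat.choose (2*m) ((m+j+1)+1) :=
      Nat.choose_succ_succ _ _
    have p2 : Nat.choose (2*m+1) (m+j+1)
        = Nat.choose (2*m) (m+j) + Nat.choose (2*m) (m+j+1) :=
      Nat.choose_succ_succ _ _
    omega
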